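/- If F is the free product of infinite cyclic groups F_1, ..., F_t (i.e., F is free of rank t with generator x_i in F_i), then γ_{c+1}(F) = B·γ_{c+2}(F), where B is the subgroup generated by all basic commutators of weight c+1 in the generators x_1, ..., x_t. -/

import Mathlib

/-- Formal commutators on `t` letters. -/
inductive FC (t : ℕ) : Type
  | of : Fin t → FC t
  | comm : FC t → FC t → FC t
deriving DecidableEq

/-- Weight of a formal commutator. -/
def FC.wt {t : ℕ} : FC t → ℕ
  | .of _ => 1
  | .comm u v => u.wt + v.wt

/-- Evaluation of a formal commutator in a group, using the convention
`[a,b] = a⁻¹b⁻¹ab`. -/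
def FC.eval {t : ℕ} {F : Type*} [Group F] (x : Fin t → F) : FC t → F
  | .of i => x i
  | .comm u v => (FC.eval x u)⁻¹ * (FC.eval x v)⁻¹ * FC.eval x u * FC.eval x v

/-- M. Hall's basic commutators, relative to a linear order on formal
commutators (assumed compatible with weight): the letters are basic, and
`[u,v]` is basic iff `u, v` are basic, `v < u`, and if `u = [u₁,u₂]` then
`u₂ ≤ v`. -/
def FC.IsBasic {t : ℕ} [LinearOrder (FC t)] : FC t → Prop
  | .of _ => True
  | .comm u v => u.IsBasic ∧ v.IsBasic ∧ v < u ∧ ∀ u₁ u₂, u = .comm u₁ u₂ → u₂ ≤ v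

namespace HallAux

open Subgroup
open scoped commutatorElement

/-- the lower central series of the whole group. -/
abbrev lowerCentralSeries (G : Type*) [Group G] (n : ℕ) : Subgroup G :=
  (⊤ : Subgroup G).lowerCentralSeries n

lemma lowerCentralSeries_zero {G : Type*} [Group G] : lowerCentralSeries G 0 = ⊤ := rfl

lemma lowerCentralSeries_antitone {G : Type*} [Group G] : Antitone (lowerCentralSeries G) :=
  Subgroup.lowerCentralSeries_antitone _

/-! ### Elementary commutator calculus, with the convention `cc g h = g⁻¹h⁻¹gh`. -/

section CommCalc

variable {G : Type*} [Group G]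

/-- commutator with the convention `g⁻¹h⁻¹gh`. -/
def cc (g h : G) : G := g⁻¹ * h⁻¹ * g * h

lemma cc_mul_left (g₁ g₂ h : G) : cc (g₁ * g₂) h = g₂⁻¹ * cc g₁ h * g₂ * cc g₂ h := by
  unfold cc; group

lemma cc_mul_right (g h₁ h₂ : G) : cc g (h₁ * h₂) = cc g h₂ * h₂⁻¹ * cc g h₁ * h₂ := by
  unfold cc; group

lemma cc_inv_rev (g h : G) : (cc g h)⁻¹ = cc h g := by unfold cc; group

lemma cc_inv_left (g h : G) : cc g⁻¹ h = g * (cc g h)⁻¹ * g⁻¹ := by unfold cc; group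

lemma cc_inv_right (g h : G) : cc g h⁻¹ = h * (cc g h)⁻¹ * h⁻¹ := by unfold cc; group

lemma cc_conj (g h k : G) : cc (k * g * k⁻¹) (k * h * k⁻¹) = k * cc g h * k⁻¹ := by
  unfold cc; group

lemma cc_one_left (h : G) : cc (1 : G) h = 1 := by unfold cc; group

lemma cc_one_right (g : G) : cc g (1 : G) = 1 := by unfold cc; group

lemma conj_mul_cc (z y : G) : y⁻¹ * z * y = z * cc z y := by unfold cc; group

lemma conj_eq_self {c : G} (hc : ∀ q : G, Commute c q) (k : G) : k⁻¹ * c * k = c := by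
  rw [← (hc k⁻¹).eq, inv_mul_cancel_right]

lemma conj_eq_self' {c : G} (hc : ∀ q : G, Commute c q) (k : G) : k * c * k⁻¹ = c := by
  rw [← (hc k).eq, mul_inv_cancel_right]

lemma aux1 (x y z : G)
    (A1 : ∀ q : G, Commute (cc (cc x y) z) q)
    (B1 : cc (cc x y) (cc z y) = 1) :
    cc (cc x y⁻¹) z = (cc (cc x y) z)⁻¹ := by
  have h2 : cc (cc x y) (z * cc z y) = cc (cc x y) z := by
    rw [cc_mul_right, B1, one_mul]
    exact conj_eq_self A1 _
  calc cc (cc x y⁻¹) z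
      = cc (y * (cc x y)⁻¹ * y⁻¹) (y * (y⁻¹ * z * y) * y⁻¹) := by
        rw [cc_inv_right]; congr 1; group
    _ = y * cc (cc x y)⁻¹ (y⁻¹ * z * y) * y⁻¹ := by rw [cc_conj]
    _ = y * cc (cc x y)⁻¹ (z * cc z y) * y⁻¹ := by rw [conj_mul_cc]
    _ = y * (cc x y * (cc (cc x y) (z * cc z y))⁻¹ * (cc x y)⁻¹) * y⁻¹ := by rw [cc_inv_left]
    _ = y * (cc (cc x y) z)⁻¹ * y⁻¹ := by
        rw [h2, conj_eq_self' (fun q => (A1 q).inv_left) (cc x y)]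
    _ = (cc (cc x y) z)⁻¹ := by
        have := conj_eq_self' (fun q => (A1 q).inv_left) (c := (cc (cc x y) z)⁻¹) y
        rw [this]

lemma jacobi (x y z : G)
    (A1 : ∀ q : G, Commute (cc (cc x y) z) q)
    (A2 : ∀ q : G, Commute (cc (cc y z) x) q)
    (A3 : ∀ q : G, Commute (cc (cc z x) y) q)
    (B1 : cc (cc x y) (cc z y) = 1)
    (B2 : cc (cc y z) (cc x z) = 1)
    (B3 : cc (cc z x) (cc y x) = 1) :
    cc (cc x y) z = (cc (cc y z) x)⁻¹ * (cc (cc z x) y)⁻¹ := by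
  have hw : (y⁻¹ * cc (cc x y⁻¹) z * y) * (z⁻¹ * cc (cc y z⁻¹) x * z) *
      (x⁻¹ * cc (cc z x⁻¹) y * x) = 1 := by
    unfold cc; group
  rw [aux1 x y z A1 B1, aux1 y z x A2 B2, aux1 z x y A3 B3,
    conj_eq_self (fun q => (A1 q).inv_left) y,
    conj_eq_self (fun q => (A2 q).inv_left) z,
    conj_eq_self (fun q => (A3 q).inv_left) x] at hw
  have h5 : (cc (cc x y) z)⁻¹ * ((cc (cc y z) x)⁻¹ * (cc (cc z x) y)⁻¹) = 1 := by
    rw [← mul_assoc]; exact hw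
  exact inv_injective (eq_inv_of_mul_eq_one_left h5)

end CommCalc

/-! ### Lower central series facts -/

section LCS

variable {G : Type*} [Group G]

lemma lcs_succ_eq (n : ℕ) :
    lowerCentralSeries G (n + 1) = ⁅lowerCentralSeries G n, (⊤ : Subgroup G)⁆ := rfl

lemma comm3_le {H₁ H₂ H₃ N : Subgroup G} [N.Normal]
    (h1 : ⁅⁅H₂, H₃⁆, H₁⁆ ≤ N) (h2 : ⁅⁅H₃, H₁⁆, H₂⁆ ≤ N) : ⁅⁅H₁, H₂⁆, H₃⁆ ≤ N := by
  have key : ∀ {A B C : Subgroup G}, ⁅⁅A, B⁆, C⁆ ≤ N ↔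
      ⁅⁅map (QuotientGroup.mk' N) A, map (QuotientGroup.mk' N) B⁆,
        map (QuotientGroup.mk' N) C⁆ = ⊥ := by
    intro A B C
    rw [← map_commutator, ← map_commutator, Subgroup.map_eq_bot_iff, QuotientGroup.ker_mk']
  exact key.mpr (commutator_commutator_eq_bot_of_rotate (key.mp h1) (key.mp h2))

lemma lcs_comm : ∀ n m : ℕ,
    ⁅lowerCentralSeries G m, lowerCentralSeries G n⁆ ≤ lowerCentralSeries G (m + n + 1)
  | 0, m => by
    rw [lowerCentralSeries_zero]
    exact le_of_eq rfl
  | n + 1, m => by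
    rw [commutator_comm, lcs_succ_eq]
    apply comm3_le
    · rw [commutator_comm (⊤ : Subgroup G) (lowerCentralSeries G m), ← lcs_succ_eq]
      have := lcs_comm n (m + 1)
      rwa [show m + 1 + n + 1 = m + (n + 1) + 1 by omega] at this
    · calc ⁅⁅lowerCentralSeries G m, lowerCentralSeries G n⁆, (⊤ : Subgroup G)⁆
          ≤ ⁅lowerCentralSeries G (m + n + 1), (⊤ : Subgroup G)⁆ :=
            commutator_mono (lcs_comm n m) le_rfl
        _ = lowerCentralSeries G (m + n + 2) := (lcs_succ_eq _).symm
        _ ≤ lowerCentralSeries G (m + (n + 1) + 1) :=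
            le_of_eq (by rw [show m + n + 2 = m + (n + 1) + 1 by omega])

lemma cc_mem_lcs {m n : ℕ} {g h : G} (hg : g ∈ lowerCentralSeries G m)
    (hh : h ∈ lowerCentralSeries G n) : cc g h ∈ lowerCentralSeries G (m + n + 1) := by
  have he : cc g h = ⁅g⁻¹, h⁻¹⁆ := by
    rw [commutatorElement_def]; unfold cc; group
  rw [he]
  exact lcs_comm n m (commutator_mem_commutator (inv_mem hg) (inv_mem hh))

end LCS

/-! ### Formal commutator facts -/

@[simp] lemma wt_of {t : ℕ} (i : Fin t) : (FC.of i).wt = 1 := rfl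

@[simp] lemma wt_comm {t : ℕ} (u v : FC t) : (FC.comm u v).wt = u.wt + v.wt := rfl

lemma wt_pos {t : ℕ} (w : FC t) : 1 ≤ w.wt := by
  induction w with
  | of i => simp
  | comm u v ihu ihv => simp; omega

lemma finite_wt_le (t W : ℕ) : {w : FC t | w.wt ≤ W}.Finite := by
  induction W with
  | zero =>
    have : {w : FC t | w.wt ≤ 0} = ∅ := by
      ext w; simp only [Set.mem_setOf_eq, Set.mem_empty_iff_false, iff_false]
      have := wt_pos w; omega
    rw [this]; exact Set.finite_empty
  | succ W ih =>
    apply Set.Finite.subset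
      ((Set.finite_range (FC.of : Fin t → FC t)).union (Set.Finite.image2 FC.comm ih ih))
    intro w hw
    cases w with
    | of i => exact Or.inl ⟨i, rfl⟩
    | comm u v =>
      right
      have h1 := wt_pos u
      have h2 := wt_pos v
      have hw' : u.wt + v.wt ≤ W + 1 := by simpa using hw
      exact Set.mem_image2.mpr ⟨u, by simp only [Set.mem_setOf_eq]; omega,
        v, by simp only [Set.mem_setOf_eq]; omega, rfl⟩

section Main

variable {t : ℕ} [LinearOrder (FC t)]

local notation "FG" => FreeGroup (Fin t)

/-- Evaluation of a formal commutator at the generators of the free group. -/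
def ev (w : FC t) : FreeGroup (Fin t) := FC.eval FreeGroup.of w

/-- The set of evaluations of basic commutators of weight `n+1`. -/
def SS (t : ℕ) [LinearOrder (FC t)] (n : ℕ) : Set (FreeGroup (Fin t)) :=
  {g | ∃ w : FC t, w.IsBasic ∧ w.wt = n + 1 ∧ FC.eval FreeGroup.of w = g}

lemma ev_comm (u v : FC t) : ev (FC.comm u v) = cc (ev u) (ev v) := rfl

lemma ev_mem (w : FC t) : ev w ∈ lowerCentralSeries FG (w.wt - 1) := by
  induction w with
  | of i => exact mem_top _
  | comm u v ihu ihv =>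
    have h := cc_mem_lcs ihu ihv
    have e : u.wt - 1 + (v.wt - 1) + 1 = (FC.comm u v).wt - 1 := by
      have := wt_pos u; have := wt_pos v; simp; omega
    rw [ev_comm]
    exact e ▸ h

lemma BB_le (n : ℕ) : Subgroup.closure (SS t n) ≤ lowerCentralSeries FG n := by
  rw [closure_le]
  rintro g ⟨w, hb, hwt, rfl⟩
  have h := ev_mem w
  rw [hwt] at h
  simpa [ev] using h

lemma easy (n : ℕ) :
    Subgroup.closure (SS t n) ⊔ lowerCentralSeries FG (n + 1) ≤ lowerCentralSeries FG n :=
  sup_le (BB_le n) (lowerCentralSeries_antitone (Nat.le_succ n))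

lemma step (hord : ∀ u v : FC t, u.wt < v.wt → u < v) (n : ℕ)
    (IH : ∀ m ≤ n, lowerCentralSeries FG m
      = Subgroup.closure (SS t m) ⊔ lowerCentralSeries FG (m + 1)) :
    lowerCentralSeries FG (n + 1)
      ≤ Subgroup.closure (SS t (n + 1)) ⊔ lowerCentralSeries FG (n + 2) := by
  classical
  set π : FG →* FG ⧸ lowerCentralSeries FG (n + 2) :=
    QuotientGroup.mk' (lowerCentralSeries FG (n + 2)) with hπdef
  set D : Subgroup (FG ⧸ lowerCentralSeries FG (n + 2)) := Subgroup.closure (π '' SS t (n + 1))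
    with hDdef
  have map_cc : ∀ g h : FG, π (cc g h) = cc (π g) (π h) := by
    intro g h; unfold cc; simp only [map_mul, map_inv]
  have kill : ∀ w ∈ lowerCentralSeries FG (n + 2), π w = 1 := by
    intro w hw
    exact (QuotientGroup.eq_one_iff w).mpr hw
  have central : ∀ z ∈ lowerCentralSeries FG (n + 1), ∀ q, Commute (π z) q := by
    intro z hz q
    obtain ⟨w, rfl⟩ := QuotientGroup.mk'_surjective (lowerCentralSeries FG (n + 2)) q
    have h3 : (z * w) * (w * z)⁻¹ ∈ lowerCentralSeries FG (n + 2) := by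
      have he : (z * w) * (w * z)⁻¹ = cc z⁻¹ w⁻¹ := by unfold cc; group
      rw [he]
      have := cc_mem_lcs (G := FG) (n := 0) (inv_mem hz)
        (show w⁻¹ ∈ lowerCentralSeries FG 0 from mem_top _)
      simpa using this
    have h4 : π (z * w) = π (w * z) := by
      have := kill _ h3
      rw [map_mul, map_inv] at this
      exact mul_inv_eq_one.mp this
    show π z * QuotientGroup.mk' _ w = QuotientGroup.mk' _ w * π z
    calc π z * π w = π (z * w) := (map_mul π z w).symm
      _ = π (w * z) := h4
      _ = π w * π z := map_mul π w z
  have mem_of_D : ∀ w : FG, π w ∈ D →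
      w ∈ Subgroup.closure (SS t (n + 1)) ⊔ lowerCentralSeries FG (n + 2) := by
    intro w hw
    have hbot : Subgroup.map π (lowerCentralSeries FG (n + 2)) = ⊥ :=
      (Subgroup.map_eq_bot_iff _).mpr (by rw [hπdef, QuotientGroup.ker_mk'])
    have hmap : Subgroup.map π (Subgroup.closure (SS t (n + 1)) ⊔ lowerCentralSeries FG (n + 2))
        = D := by
      rw [Subgroup.map_sup, MonoidHom.map_closure, hbot, sup_bot_eq, hDdef]
    have h1 : w ∈ Subgroup.comap π
        (Subgroup.map π (Subgroup.closure (SS t (n + 1)) ⊔ lowerCentralSeries FG (n + 2))) := by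
      rw [hmap]; exact hw
    rw [Subgroup.comap_map_eq, hπdef, QuotientGroup.ker_mk', sup_assoc, sup_idem] at h1
    exact h1
  -- left reduction
  have red : ∀ m q : ℕ, m + q = n → ∀ h ∈ lowerCentralSeries FG q,
      ∀ g ∈ lowerCentralSeries FG m,
      (∀ b : FC t, b.IsBasic → b.wt = m + 1 → π (cc (ev b) h) ∈ D) →
      π (cc g h) ∈ D := by
    intro m q hmq h hh g hg hyp
    have hg' : g ∈ Subgroup.closure (SS t m) ⊔ lowerCentralSeries FG (m + 1) := by
      rw [← IH m (by omega)]; exact hg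
    rw [← SetLike.mem_coe, Subgroup.mul_normal, Set.mem_mul] at hg'
    obtain ⟨b, hb, z, hz, rfl⟩ := hg'
    have hcent : ∀ g' ∈ lowerCentralSeries FG m, ∀ r, Commute (π (cc g' h)) r := by
      intro g' hg' r
      refine central _ ?_ r
      have := cc_mem_lcs hg' hh
      rwa [show m + q + 1 = n + 1 by omega] at this
    have hzh : π (cc z h) = 1 := by
      apply kill
      have := cc_mem_lcs hz hh
      rwa [show m + 1 + q + 1 = n + 2 by omega] at this
    have hbL : b ∈ lowerCentralSeries FG m := BB_le m hb
    have key : π (cc (b * z) h) = π (cc b h) := by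
      rw [cc_mul_left, map_mul, map_mul, map_mul, map_inv, hzh, mul_one,
        conj_eq_self (hcent b hbL) (π z)]
    rw [key]
    refine Subgroup.closure_induction (p := fun x _ => π (cc x h) ∈ D) ?_ ?_ ?_ ?_ hb
    · rintro x ⟨w, hwb, hwt, rfl⟩
      exact hyp w hwb hwt
    · show π (cc (1 : FG) h) ∈ D
      rw [cc_one_left, map_one]; exact one_mem D
    · intro a b' ha hb' iha ihb'
      have haL : a ∈ lowerCentralSeries FG m := BB_le m ha
      show π (cc (a * b') h) ∈ D
      rw [cc_mul_left, map_mul, map_mul, map_mul, map_inv,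
        conj_eq_self (hcent a haL) (π b')]
      exact mul_mem iha ihb'
    · intro a ha iha
      have haL : a ∈ lowerCentralSeries FG m := BB_le m ha
      show π (cc a⁻¹ h) ∈ D
      rw [cc_inv_left, map_mul, map_mul, map_inv, map_inv,
        conj_eq_self' (fun r => (hcent a haL r).inv_left) (π a)]
      exact inv_mem iha
  -- right reduction
  have red_r : ∀ m q : ℕ, m + q = n → ∀ g ∈ lowerCentralSeries FG m,
      ∀ h ∈ lowerCentralSeries FG q,
      (∀ b : FC t, b.IsBasic → b.wt = q + 1 → π (cc g (ev b)) ∈ D) →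
      π (cc g h) ∈ D := by
    intro m q hmq g hg h hh hyp
    have hh' : h ∈ Subgroup.closure (SS t q) ⊔ lowerCentralSeries FG (q + 1) := by
      rw [← IH q (by omega)]; exact hh
    rw [← SetLike.mem_coe, Subgroup.mul_normal, Set.mem_mul] at hh'
    obtain ⟨b, hb, z, hz, rfl⟩ := hh'
    have hcent : ∀ h' ∈ lowerCentralSeries FG q, ∀ r, Commute (π (cc g h')) r := by
      intro h' hh' r
      refine central _ ?_ r
      have := cc_mem_lcs hg hh'
      rwa [show m + q + 1 = n + 1 by omega] at this
    have hgz : π (cc g z) = 1 := by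
      apply kill
      have := cc_mem_lcs hg hz
      rwa [show m + (q + 1) + 1 = n + 2 by omega] at this
    have hbL : b ∈ lowerCentralSeries FG q := BB_le q hb
    have key : π (cc g (b * z)) = π (cc g b) := by
      rw [cc_mul_right, map_mul, map_mul, map_mul, map_inv, hgz, one_mul,
        conj_eq_self (hcent b hbL) (π z)]
    rw [key]
    refine Subgroup.closure_induction (p := fun x _ => π (cc g x) ∈ D) ?_ ?_ ?_ ?_ hb
    · rintro x ⟨w, hwb, hwt, rfl⟩
      exact hyp w hwb hwt
    · show π (cc g (1 : FG)) ∈ D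
      rw [cc_one_right, map_one]; exact one_mem D
    · intro a b' ha hb' iha ihb'
      have haL : a ∈ lowerCentralSeries FG q := BB_le q ha
      show π (cc g (a * b')) ∈ D
      have : π (cc g (a * b')) = π (cc g b') * π (cc g a) := by
        calc π (cc g (a * b'))
            = π (cc g b') * ((π b')⁻¹ * π (cc g a) * π b') := by
              rw [cc_mul_right]; simp only [map_mul, map_inv, mul_assoc]
          _ = π (cc g b') * π (cc g a) := by rw [conj_eq_self (hcent a haL) (π b')]
      rw [this]
      exact mul_mem ihb' iha
    · intro a ha iha
      have haL : a ∈ lowerCentralSeries FG q := BB_le q ha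
      show π (cc g a⁻¹) ∈ D
      rw [cc_inv_right, map_mul, map_mul, map_inv, map_inv,
        conj_eq_self' (fun r => (hcent a haL r).inv_left) (π a)]
      exact inv_mem iha
  -- triple and quadruple commutator facts
  have cc3 : ∀ p q r : FC t, p.wt + q.wt + r.wt = n + 2 →
      cc (cc (ev p) (ev q)) (ev r) ∈ lowerCentralSeries FG (n + 1) := by
    intro p q r h
    have h1 := cc_mem_lcs (cc_mem_lcs (ev_mem p) (ev_mem q)) (ev_mem r)
    have := wt_pos p; have := wt_pos q; have := wt_pos r
    rwa [show p.wt - 1 + (q.wt - 1) + 1 + (r.wt - 1) + 1 = n + 1 by omega] at h1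
  have cc4 : ∀ p q r s : FC t, n + 3 ≤ p.wt + q.wt + r.wt + s.wt →
      π (cc (cc (ev p) (ev q)) (cc (ev r) (ev s))) = 1 := by
    intro p q r s h
    apply kill
    have h1 := cc_mem_lcs (cc_mem_lcs (ev_mem p) (ev_mem q)) (cc_mem_lcs (ev_mem r) (ev_mem s))
    have := wt_pos p; have := wt_pos q; have := wt_pos r; have := wt_pos s
    exact lowerCentralSeries_antitone (by omega) h1
  -- the measure
  have Tfin : {w : FC t | w.wt ≤ n + 1}.Finite := finite_wt_le t (n + 1)
  set nu : FC t → ℕ := fun v => ({w : FC t | w.wt ≤ n + 1 ∧ v < w}).ncard with hnudef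
  have nu_lt : ∀ v w : FC t, v < w → w.wt ≤ n + 1 → nu w < nu v := by
    intro v w hvw hw
    have hsub : {u : FC t | u.wt ≤ n + 1 ∧ w < u} ⊆ {u : FC t | u.wt ≤ n + 1 ∧ v < u} :=
      fun u hu => ⟨hu.1, hvw.trans hu.2⟩
    apply Set.ncard_lt_ncard
    · exact (Set.ssubset_iff_of_subset hsub).mpr ⟨w, ⟨hw, hvw⟩, fun hmem => lt_irrefl w hmem.2⟩
    · exact Tfin.subset fun u hu => hu.1
  -- membership of evaluated basic commutators of weight n+2 in D
  have gen_mem : ∀ w : FC t, w.IsBasic → w.wt = n + 2 → π (ev w) ∈ D := by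
    intro w hb hw
    exact Subgroup.subset_closure ⟨ev w, ⟨w, hb, hw, rfl⟩, rfl⟩
  -- the main claim
  have claim : ∀ k : ℕ, ∀ u v : FC t, u.IsBasic → v.IsBasic → u.wt + v.wt = n + 2 →
      nu (min u v) ≤ k → π (cc (ev u) (ev v)) ∈ D := by
    intro k
    induction k using Nat.strong_induction_on with
    | _ k IHk =>
    intro u v hu hv hsum hk
    have oriented : ∀ u v : FC t, u.IsBasic → v.IsBasic → u.wt + v.wt = n + 2 → v < u →
        nu v ≤ k → π (cc (ev u) (ev v)) ∈ D := by
      intro u v hu hv hsum hlt hk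
      cases u with
      | of i =>
        exact gen_mem (FC.comm (FC.of i) v)
          ⟨trivial, hv, hlt, fun u₁ u₂ h => by cases h⟩ (by simpa using hsum)
      | comm u1 u2 =>
        obtain ⟨hb1, hb2, h21, hcond⟩ := hu
        by_cases hc : u2 ≤ v
        · refine gen_mem (FC.comm (FC.comm u1 u2) v)
            ⟨⟨hb1, hb2, h21, hcond⟩, hv, hlt, ?_⟩ (by simpa using hsum)
          intro u₁ u₂ h
          injection h with h1 h2
          subst h1; subst h2
          exact hc
        · push_neg at hc
          have hp1 := wt_pos u1
          have hp2 := wt_pos u2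
          have hpv := wt_pos v
          have hsum' : u1.wt + u2.wt + v.wt = n + 2 := by simpa using hsum
          have hvu1 : v < u1 := hc.trans h21
          -- T1 : π (cc (cc (ev u2) (ev v)) (ev u1)) ∈ D
          have T1 : π (cc (ev (FC.comm u2 v)) (ev u1)) ∈ D := by
            apply red (u2.wt + v.wt - 1) (u1.wt - 1) (by omega) (ev u1) (ev_mem u1)
              (ev (FC.comm u2 v)) (ev_mem (FC.comm u2 v))
            intro b hbb hbw
            have hbw' : b.wt = u2.wt + v.wt := by omega
            have hvb : v < b := hord v b (by omega)
            have hmin : v < min b u1 := lt_min hvb hvu1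
            have hminwt : (min b u1).wt ≤ n + 1 := by
              rcases min_choice b u1 with h | h <;> rw [h] <;> omega
            have hj : nu (min b u1) < nu v := nu_lt v (min b u1) hmin hminwt
            exact IHk (nu (min b u1)) (lt_of_lt_of_le hj hk) b u1 hbb hb1 (by omega) le_rfl
          -- T2 : π (cc (ev (FC.comm u1 v)) (ev u2)) ∈ D
          have T2 : π (cc (ev (FC.comm u1 v)) (ev u2)) ∈ D := by
            apply red (u1.wt + v.wt - 1) (u2.wt - 1) (by omega) (ev u2) (ev_mem u2)
              (ev (FC.comm u1 v)) (ev_mem (FC.comm u1 v))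
            intro b hbb hbw
            have hbw' : b.wt = u1.wt + v.wt := by omega
            have hvb : v < b := hord v b (by omega)
            have hmin : v < min b u2 := lt_min hvb hc
            have hminwt : (min b u2).wt ≤ n + 1 := by
              rcases min_choice b u2 with h | h <;> rw [h] <;> omega
            have hj : nu (min b u2) < nu v := nu_lt v (min b u2) hmin hminwt
            exact IHk (nu (min b u2)) (lt_of_lt_of_le hj hk) b u2 hbb hb2 (by omega) le_rfl
          -- conversion of the second Jacobi term
          have hcent2 : ∀ r, Commute (π (cc (cc (ev u1) (ev v)) (ev u2))) r :=
            fun r => central _ (cc3 u1 v u2 (by omega)) r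
          have T2' : π (cc (cc (ev v) (ev u1)) (ev u2)) ∈ D := by
            have e1 : cc (ev v) (ev u1) = (cc (ev u1) (ev v))⁻¹ := (cc_inv_rev _ _).symm
            have h2 : π (cc (cc (ev v) (ev u1)) (ev u2))
                = (π (cc (cc (ev u1) (ev v)) (ev u2)))⁻¹ := by
              rw [e1, cc_inv_left, map_mul, map_mul, map_inv, map_inv,
                conj_eq_self' (fun r => (hcent2 r).inv_left) (π (cc (ev u1) (ev v)))]
            rw [h2]
            exact inv_mem T2
          -- Jacobi
          have A1 : ∀ r, Commute (cc (cc (π (ev u1)) (π (ev u2))) (π (ev v))) r := by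
            intro r
            have := central _ (cc3 u1 u2 v (by omega)) r
            rwa [map_cc, map_cc] at this
          have A2 : ∀ r, Commute (cc (cc (π (ev u2)) (π (ev v))) (π (ev u1))) r := by
            intro r
            have := central _ (cc3 u2 v u1 (by omega)) r
            rwa [map_cc, map_cc] at this
          have A3 : ∀ r, Commute (cc (cc (π (ev v)) (π (ev u1))) (π (ev u2))) r := by
            intro r
            have := central _ (cc3 v u1 u2 (by omega)) r
            rwa [map_cc, map_cc] at this
          have B1 : cc (cc (π (ev u1)) (π (ev u2))) (cc (π (ev v)) (π (ev u2))) = 1 := by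
            have := cc4 u1 u2 v u2 (by omega)
            rwa [map_cc, map_cc, map_cc] at this
          have B2 : cc (cc (π (ev u2)) (π (ev v))) (cc (π (ev u1)) (π (ev v))) = 1 := by
            have := cc4 u2 v u1 v (by omega)
            rwa [map_cc, map_cc, map_cc] at this
          have B3 : cc (cc (π (ev v)) (π (ev u1))) (cc (π (ev u2)) (π (ev u1))) = 1 := by
            have := cc4 v u1 u2 u1 (by omega)
            rwa [map_cc, map_cc, map_cc] at this
          have hj := jacobi (π (ev u1)) (π (ev u2)) (π (ev v)) A1 A2 A3 B1 B2 B3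
          simp only [← map_cc] at hj
          show π (cc (ev (FC.comm u1 u2)) (ev v)) ∈ D
          rw [ev_comm, hj]
          exact mul_mem (inv_mem T1) (inv_mem T2')
    rcases lt_trichotomy u v with h | h | h
    · rw [min_eq_left h.le] at hk
      have hm : π (cc (ev v) (ev u)) ∈ D := oriented v u hv hu (by omega) h hk
      rw [← cc_inv_rev, map_inv]
      exact inv_mem hm
    · subst h
      rw [show cc (ev u) (ev u) = 1 by unfold cc; group, map_one]
      exact one_mem D
    · rw [min_eq_right h.le] at hk
      exact oriented u v hu hv hsum h hk
  -- top level
  rw [lcs_succ_eq, Subgroup.commutator_le]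
  intro g hg h _
  apply mem_of_D
  have hge : ⁅g, h⁆ = cc g⁻¹ h⁻¹ := by rw [commutatorElement_def]; unfold cc; group
  rw [hge]
  apply red n 0 (by omega) h⁻¹ (mem_top _) g⁻¹ (inv_mem hg)
  intro b hbb hbw
  apply red_r n 0 (by omega) (ev b) (by have := ev_mem b; rwa [hbw, Nat.add_sub_cancel] at this)
    h⁻¹ (mem_top _)
  intro b' hbb' hbw'
  exact claim (nu (min b b')) b b' hbb hbb' (by omega) le_rfl

theorem main (hord : ∀ u v : FC t, u.wt < v.wt → u < v) (n : ℕ) :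
    lowerCentralSeries FG n
      = Subgroup.closure (SS t n) ⊔ lowerCentralSeries FG (n + 1) := by
  induction n using Nat.strong_induction_on with
  | _ n IH =>
  refine le_antisymm ?_ (easy n)
  cases n with
  | zero =>
    have h1 : Subgroup.closure (Set.range (FreeGroup.of : Fin t → FG))
        ≤ Subgroup.closure (SS t 0) := by
      apply Subgroup.closure_mono
      rintro g ⟨i, rfl⟩
      exact ⟨FC.of i, trivial, rfl, rfl⟩
    have h2 : (⊤ : Subgroup FG) ≤ Subgroup.closure (SS t 0) := by
      rw [← FreeGroup.closure_range_of (Fin t)]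
      exact h1
    exact le_trans (le_of_eq lowerCentralSeries_zero) (le_trans h2 le_sup_left)
  | succ m =>
    exact step hord m (fun j hj => IH j (by omega))

end Main

end HallAux

/-- P. Hall's basis theorem: if `F` is free on `x₁, …, x_t` (the free product of
`t` infinite cyclic groups), then `γ_{c+1}(F) = B·γ_{c+2}(F)`, where `B` is the
subgroup generated by the basic commutators of weight `c+1` in the generators
(relative to any weight-compatible linear order on formal commutators). Here
`γ_n(F) = lowerCentralSeries F (n-1)`, and the product `B·γ_{c+2}(F)` is the
join `B ⊔ γ_{c+2}(F)` since `γ_{c+2}(F)` is normal. -/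
theorem hall_basis_theorem (t c : ℕ) [LinearOrder (FC t)]
    (hord : ∀ u v : FC t, u.wt < v.wt → u < v) :
    (⊤ : Subgroup (FreeGroup (Fin t))).lowerCentralSeries c =
      Subgroup.closure
          {g : FreeGroup (Fin t) |
            ∃ w : FC t, w.IsBasic ∧ w.wt = c + 1 ∧ FC.eval FreeGroup.of w = g}
        ⊔ (⊤ : Subgroup (FreeGroup (Fin t))).lowerCentralSeries (c + 1) := by
  exact HallAux.main hord c
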